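/- Let G be a countable group and A a subgroup of G. Then for every operator T in F(ℓ²(G))·I_{ℂ[A]}, the family (⟨T δ_a, δ_a⟩)_{a∈A} is absolutely summable and ∑_{a∈A} ⟨T δ_a, δ_a⟩ = 0. -/

import Mathlib

noncomputable section

open ComplexConjugate
open scoped ENNReal

local notation "⟪" x ", " y "⟫" => @inner ℂ _ _ x y

/-- ℓ²(G): square summable complex valued functions. -/
abbrev L2 (G : Type) : Type := lp (fun _ : G => ℂ) 2

/-- The standard orthonormal basis vector δ_g of ℓ²(G). -/
def delta {G : Type} (g : G) : L2 G :=
  letI := Classical.decEq G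
  lp.single 2 g 1

theorem memℓp_comp_equiv {G : Type} (e : G ≃ G) (x : L2 G) :
    Memℓp (fun g => x (e g)) 2 := by
  have h2 : (0:ℝ) < (2:ℝ≥0∞).toReal := by norm_num
  rw [memℓp_gen_iff h2]
  have hx : Summable fun i => ‖x i‖ ^ (2:ℝ≥0∞).toReal := (memℓp_gen_iff h2).1 (lp.memℓp x)
  exact (e.summable_iff (f := fun i => ‖x i‖ ^ (2:ℝ≥0∞).toReal)).2 hx

/-- The isometry of ℓ²(G) induced by precomposition with a bijection of G. -/
def lpShift {G : Type} (e : G ≃ G) : L2 G ≃ₗᵢ[ℂ] L2 G where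
  toFun x := ⟨fun g => x (e g), memℓp_comp_equiv e x⟩
  invFun x := ⟨fun g => x (e.symm g), memℓp_comp_equiv e.symm x⟩
  left_inv x := by
    apply Subtype.ext
    funext g
    simp
  right_inv x := by
    apply Subtype.ext
    funext g
    simp
  map_add' x y := by
    apply Subtype.ext
    funext g
    simp only [lp.coeFn_add]
    rfl
  map_smul' c x := by
    apply Subtype.ext
    funext g
    simp [lp.coeFn_smul, Pi.smul_apply]
  norm_map' x := by
    have h2 : (0:ℝ) < (2:ℝ≥0∞).toReal := by norm_num
    rw [lp.norm_eq_tsum_rpow h2, lp.norm_eq_tsum_rpow h2]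
    congr 1
    exact e.tsum_eq (f := fun g => ‖x g‖ ^ (2:ℝ≥0∞).toReal)

/-- Right translation operator R_h : δ_g ↦ δ_{gh}. -/
def Rop {G : Type} [Group G] (h : G) : L2 G →L[ℂ] L2 G :=
  (lpShift (Equiv.mulRight h⁻¹)).toLinearIsometry.toContinuousLinearMap

/-- Left translation operator L_h : δ_g ↦ δ_{hg}. -/
def Lop {G : Type} [Group G] (h : G) : L2 G →L[ℂ] L2 G :=
  (lpShift (Equiv.mulLeft h⁻¹)).toLinearIsometry.toContinuousLinearMap

/-- A bounded operator has finite rank if its range is finite dimensional. -/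
def FiniteRank {G : Type} (T : L2 G →L[ℂ] L2 G) : Prop :=
  FiniteDimensional ℂ ↥(LinearMap.range (T : L2 G →ₗ[ℂ] L2 G))

/-- The right action T·g := R_g ∘ T ∘ R_{g⁻¹} of G on operators. -/
def opAct {G : Type} [Group G] (T : L2 G →L[ℂ] L2 G) (g : G) : L2 G →L[ℂ] L2 G :=
  Rop g ∘L T ∘L Rop g⁻¹

/-- The subspace F(ℓ²(G))·I_{ℂ[H]}: the ℂ-linear span of the operators T - T·h with
T of finite rank and h ∈ H. -/
def FIdeal {G : Type} [Group G] (H : Subgroup G) : Submodule ℂ (L2 G →L[ℂ] L2 G) :=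
  Submodule.span ℂ
    {S | ∃ (T : L2 G →L[ℂ] L2 G) (h : G), FiniteRank T ∧ h ∈ H ∧ S = T - opAct T h}

/-- The trace of a (finite rank) operator on ℓ²(G). -/
def opTrace {G : Type} (T : L2 G →L[ℂ] L2 G) : ℂ :=
  ∑' g : G, ⟪delta g, T (delta g)⟫

lemma inner_delta_left {G : Type} (g : G) (y : L2 G) : ⟪delta g, y⟫ = y g := by
  classical
  rw [delta, lp.inner_single_left]
  simp [RCLike.inner_apply]

lemma inner_delta_right {G : Type} (x : L2 G) (g : G) : ⟪x, delta g⟫ = conj (x g) := by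
  classical
  rw [delta, lp.inner_single_right]
  simp [RCLike.inner_apply]

lemma Rop_apply {G : Type} [Group G] (h : G) (x : L2 G) (g : G) :
    (Rop h x) g = x (g * h⁻¹) := rfl

lemma Rop_delta {G : Type} [Group G] (h g : G) : Rop h (delta g) = delta (g * h) := by
  classical
  apply Subtype.ext
  funext k
  show (delta g) (k * h⁻¹) = (delta (g * h)) k
  simp only [delta, lp.single_apply]
  by_cases hk : k = g * h
  · subst hk; simp
  · rw [Pi.single_apply, Pi.single_apply, if_neg hk, if_neg]
    intro hc
    exact hk (by rw [← hc]; group)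

lemma diag_opAct {G : Type} [Group G] (T : L2 G →L[ℂ] L2 G) (h g : G) :
    ⟪delta g, opAct T h (delta g)⟫ = ⟪delta (g * h⁻¹), T (delta (g * h⁻¹))⟫ := by
  have h1 : Rop h⁻¹ (delta g) = delta (g * h⁻¹) := Rop_delta h⁻¹ g
  rw [inner_delta_left, inner_delta_left]
  show (Rop h (T (Rop h⁻¹ (delta g)))) g = _
  rw [h1, Rop_apply]

lemma summable_prod_norm {G : Type} (x y : L2 G) :
    Summable (fun g : G => ‖x g‖ * ‖y g‖) := by
  have h2 : (0:ℝ) < (2:ℝ≥0∞).toReal := by norm_num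
  have hx : Summable fun g => ‖x g‖ ^ (2:ℝ≥0∞).toReal := (memℓp_gen_iff h2).1 (lp.memℓp x)
  have hy : Summable fun g => ‖y g‖ ^ (2:ℝ≥0∞).toReal := (memℓp_gen_iff h2).1 (lp.memℓp y)
  have hx2 : Summable fun g => ‖x g‖ ^ 2 := by
    convert hx using 2 with g
    rw [show (2:ℝ≥0∞).toReal = (2:ℕ) by norm_num, Real.rpow_natCast]
  have hy2 : Summable fun g => ‖y g‖ ^ 2 := by
    convert hy using 2 with g
    rw [show (2:ℝ≥0∞).toReal = (2:ℕ) by norm_num, Real.rpow_natCast]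
  refine Summable.of_nonneg_of_le (fun g => by positivity)
    (fun g => ?_) (((hx2.add hy2).div_const 2))
  have := two_mul_le_add_sq ‖x g‖ ‖y g‖
  nlinarith [this]

/-- The diagonal of a finite rank operator is absolutely summable. -/
lemma summable_diag_of_finiteRank {G : Type} (T : L2 G →L[ℂ] L2 G) (hT : FiniteRank T) :
    Summable (fun g : G => ‖⟪delta g, T (delta g)⟫‖) := by
  classical
  haveI : FiniteDimensional ℂ ↥(LinearMap.range (T : L2 G →ₗ[ℂ] L2 G)) := hT
  set V := LinearMap.range (T : L2 G →ₗ[ℂ] L2 G) with hV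
  let b := stdOrthonormalBasis ℂ V
  let e : Fin (Module.finrank ℂ V) → L2 G := fun i => ((b i : V) : L2 G)
  let f : Fin (Module.finrank ℂ V) → L2 G := fun i => ContinuousLinearMap.adjoint T (e i)
  have hmem : ∀ g : G, T (delta g) ∈ V := fun g => ⟨delta g, rfl⟩
  have key : ∀ g : G, ⟪delta g, T (delta g)⟫ = ∑ i, conj ((f i) g) * ((e i) g) := by
    intro g
    set v : V := ⟨T (delta g), hmem g⟩ with hv
    have hrepr : ∀ i, b.repr v i = conj ((f i) g) := by
      intro i
      rw [b.repr_apply_apply, Submodule.coe_inner]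
      show ⟪e i, T (delta g)⟫ = _
      rw [← ContinuousLinearMap.adjoint_inner_left, inner_delta_right]
    have hsum : T (delta g) = ∑ i, b.repr v i • (e i) := by
      have := b.sum_repr v
      have h2 : ((∑ i, b.repr v i • b i : V) : L2 G) = ∑ i, b.repr v i • (e i) := by
        push_cast
        rfl
      rw [← h2, this]
    rw [hsum, inner_sum]
    congr 1
    funext i
    rw [inner_smul_right, inner_delta_left, hrepr i]
  have hbound : ∀ g : G, ‖⟪delta g, T (delta g)⟫‖ ≤ ∑ i, ‖(f i) g‖ * ‖(e i) g‖ := by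
    intro g
    rw [key g]
    refine (norm_sum_le _ _).trans ?_
    apply Finset.sum_le_sum
    intro i _
    rw [norm_mul, RCLike.norm_conj]
  have hmaj : Summable (fun g : G => ∑ i, ‖(f i) g‖ * ‖(e i) g‖) :=
    summable_sum (fun i _ => summable_prod_norm (f i) (e i))
  exact Summable.of_nonneg_of_le (fun g => norm_nonneg _) hbound hmaj

set_option maxHeartbeats 1000000 in
/-- The property that the diagonal over A is absolutely summable with sum 0. -/
def DiagProp {G : Type} [Group G] (A : Subgroup G) (S : L2 G →L[ℂ] L2 G) : Prop :=
  Summable (fun a : A => ‖⟪delta (a : G), S (delta (a : G))⟫‖) ∧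
    ∑' a : A, ⟪delta (a : G), S (delta (a : G))⟫ = 0

set_option maxHeartbeats 1000000 in
lemma diagProp_zero {G : Type} [Group G] (A : Subgroup G) : DiagProp A 0 := by
  constructor
  · simp only [ContinuousLinearMap.zero_apply, inner_zero_right, norm_zero]
    exact summable_zero
  · simp only [ContinuousLinearMap.zero_apply, inner_zero_right]
    exact tsum_zero

set_option maxHeartbeats 1000000 in
lemma diagProp_add {G : Type} [Group G] (A : Subgroup G) (S1 S2 : L2 G →L[ℂ] L2 G)
    (h1 : DiagProp A S1) (h2 : DiagProp A S2) : DiagProp A (S1 + S2) := by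
  obtain ⟨hs1, ht1⟩ := h1
  obtain ⟨hs2, ht2⟩ := h2
  constructor
  · refine Summable.of_nonneg_of_le (fun a => norm_nonneg _) (fun a => ?_) (hs1.add hs2)
    simp only [ContinuousLinearMap.add_apply, inner_add_right]
    exact norm_add_le _ _
  · simp only [ContinuousLinearMap.add_apply, inner_add_right]
    rw [Summable.tsum_add hs1.of_norm hs2.of_norm, ht1, ht2, add_zero]

set_option maxHeartbeats 1000000 in
lemma diagProp_smul {G : Type} [Group G] (A : Subgroup G) (c : ℂ) (S : L2 G →L[ℂ] L2 G)
    (h : DiagProp A S) : DiagProp A (c • S) := by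
  obtain ⟨hs, ht⟩ := h
  constructor
  · simp only [ContinuousLinearMap.smul_apply, inner_smul_right, norm_mul]
    exact hs.mul_left ‖c‖
  · simp only [ContinuousLinearMap.smul_apply, inner_smul_right]
    rw [tsum_mul_left, ht, mul_zero]

set_option maxHeartbeats 1000000 in
lemma diagProp_gen {G : Type} [Group G] (A : Subgroup G) (T₀ : L2 G →L[ℂ] L2 G) (h : G)
    (hfin : FiniteRank T₀) (hA : h ∈ A) : DiagProp A (T₀ - opAct T₀ h) := by
  classical
  set f : G → ℂ := fun g => ⟪delta g, T₀ (delta g)⟫ with hf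
  have hdiag : ∀ a : A, ⟪delta (a : G), (T₀ - opAct T₀ h) (delta (a : G))⟫
      = f (a : G) - f ((a : G) * h⁻¹) := by
    intro a
    rw [ContinuousLinearMap.sub_apply, inner_sub_right, diag_opAct]
  have hsum : Summable (fun g : G => ‖f g‖) := summable_diag_of_finiteRank T₀ hfin
  have hs1 : Summable (fun a : A => ‖f (a : G)‖) :=
    hsum.comp_injective Subtype.val_injective
  have hinj : Function.Injective (fun a : A => (a : G) * h⁻¹) := by
    intro a b hab
    exact Subtype.val_injective (mul_right_cancel hab)
  have hs2 : Summable (fun a : A => ‖f ((a : G) * h⁻¹)‖) :=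
    hsum.comp_injective hinj
  constructor
  · refine Summable.of_nonneg_of_le (fun a => norm_nonneg _) (fun a => ?_) (hs1.add hs2)
    rw [hdiag a]
    exact norm_sub_le _ _
  · have hc1 : Summable (fun a : A => f (a : G)) := hs1.of_norm
    have hc2 : Summable (fun a : A => f ((a : G) * h⁻¹)) := hs2.of_norm
    have hre : ∑' a : A, f ((a : G) * h⁻¹) = ∑' a : A, f (a : G) := by
      have := (Equiv.mulRight (⟨h, hA⟩ : A)⁻¹).tsum_eq (fun a : A => f (a : G))
      rw [← this]
      exact tsum_congr fun a => by simp [Equiv.mulRight]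
    rw [tsum_congr hdiag, Summable.tsum_sub hc1 hc2, hre, sub_self]

set_option maxHeartbeats 1000000 in
/-- The set of operators satisfying `DiagProp` as a submodule. -/
def diagSubmodule {G : Type} [Group G] (A : Subgroup G) : Submodule ℂ (L2 G →L[ℂ] L2 G) where
  carrier := {S | DiagProp A S}
  zero_mem' := diagProp_zero A
  add_mem' := diagProp_add A _ _
  smul_mem' := diagProp_smul A

set_option maxHeartbeats 1000000 in
/-- Let `A` be a subgroup of a countable group `G`. For every operator
`T` in `F(ℓ²(G))·I_{ℂ[A]}`, the family `(⟨T δ_a, δ_a⟩)_{a∈A}` is absolutely summable and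
`∑_{a∈A} ⟨T δ_a, δ_a⟩ = 0`. -/
theorem diagonal_sum_over_subgroup_eq_zero
    {G : Type} [Group G] [Countable G] (A : Subgroup G)
    (T : L2 G →L[ℂ] L2 G) (hT : T ∈ FIdeal A) :
    Summable (fun a : A => ‖⟪delta (a : G), T (delta (a : G))⟫‖) ∧
      ∑' a : A, ⟪delta (a : G), T (delta (a : G))⟫ = 0 := by
  have hle : FIdeal A ≤ diagSubmodule A := by
    refine Submodule.span_le.2 ?_
    rintro S ⟨T₀, h, hfin, hA, rfl⟩
    exact diagProp_gen A T₀ h hfin hA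
  exact hle hT

end
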